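/- Let p be an odd prime and let a, t be p-integral rational numbers with t not congruent to 0 mod p. Let \langle a \rangle_p \in {0,1,...,p-1} be the residue of a modulo p. Then \sum_{k=0}^{p-1} \binom{a}{k} \binom{-1/2 - a}{k} (1-t)^k \equiv t^{\langle a \rangle_p} \sum_{k=0}^{p-1} \binom{a}{k} \binom{a - 1/2}{k} (1 - 1/t)^k (mod p). -/

import Mathlib

open Finset

/-- The generalized binomial coefficient `a(a-1)⋯(a-k+1)/k!`. -/
def gchoose (a : ℚ) (k : ℕ) : ℚ :=
  (∏ i ∈ Finset.range k, (a - i)) / (Nat.factorial k)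

/-- A rational number is `p`-integral if `p` does not divide its denominator. -/
def pInt (p : ℕ) (r : ℚ) : Prop := ¬ (p ∣ r.den)

/-- Congruence modulo `p` in the ring of `p`-integral rationals:
`r ≡ s (mod p)` iff `r - s = p·c` for some `p`-integral rational `c`. -/
def pCong (p : ℕ) (r s : ℚ) : Prop := ∃ c : ℚ, pInt p c ∧ r - s = p * c

-- characterization of pInt
lemma pInt_iff {p : ℕ} (hp : p.Prime) {r : ℚ} :
    pInt p r ↔ ∃ x d : ℤ, ¬ (p:ℤ) ∣ d ∧ r = x / d := by
  constructor
  · intro h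
    exact ⟨r.num, r.den, by exact_mod_cast h, (Rat.num_div_den r).symm⟩
  · rintro ⟨x, d, hd, rfl⟩
    have hd0 : d ≠ 0 := by rintro rfl; exact hd (dvd_zero _)
    intro hden
    apply hd
    have h1 : (((x:ℚ)/d).den : ℤ) ∣ d := by
      rw [Rat.intCast_div_eq_divInt]; exact Rat.den_dvd x d
    exact dvd_trans (by exact_mod_cast hden) h1

lemma prime_int {p : ℕ} (hp : p.Prime) : Prime (p : ℤ) := Nat.prime_iff_prime_int.mp hp

lemma pInt_intCast {p : ℕ} (hp : p.Prime) (x : ℤ) : pInt p x := by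
  rw [pInt_iff hp]
  exact ⟨x, 1, fun h => hp.one_lt.ne' (by exact_mod_cast Int.eq_one_of_dvd_one (by norm_num) h), by simp⟩

lemma pInt_natCast {p : ℕ} (hp : p.Prime) (x : ℕ) : pInt p x := by
  simpa using pInt_intCast hp x

lemma pInt_zero {p : ℕ} (hp : p.Prime) : pInt p 0 := by simpa using pInt_intCast hp 0
lemma pInt_one {p : ℕ} (hp : p.Prime) : pInt p 1 := by simpa using pInt_intCast hp 1

lemma pInt.add {p : ℕ} (hp : p.Prime) {r s : ℚ} (hr : pInt p r) (hs : pInt p s) :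
    pInt p (r + s) := by
  rw [pInt_iff hp] at *
  obtain ⟨x, d, hd, rfl⟩ := hr
  obtain ⟨y, e, he, rfl⟩ := hs
  have hd0 : (d:ℚ) ≠ 0 := Int.cast_ne_zero.2 (by rintro rfl; exact hd (dvd_zero _))
  have he0 : (e:ℚ) ≠ 0 := Int.cast_ne_zero.2 (by rintro rfl; exact he (dvd_zero _))
  refine ⟨x * e + y * d, d * e, fun h => ?_, by push_cast; field_simp⟩
  rcases (prime_int hp).2.2 _ _ h with h' | h' <;> [exact hd h'; exact he h']

lemma pInt.mul {p : ℕ} (hp : p.Prime) {r s : ℚ} (hr : pInt p r) (hs : pInt p s) :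
    pInt p (r * s) := by
  rw [pInt_iff hp] at *
  obtain ⟨x, d, hd, rfl⟩ := hr
  obtain ⟨y, e, he, rfl⟩ := hs
  refine ⟨x * y, d * e, fun h => ?_, by push_cast; ring⟩
  rcases (prime_int hp).2.2 _ _ h with h' | h' <;> [exact hd h'; exact he h']

lemma pInt.neg {p : ℕ} (hp : p.Prime) {r : ℚ} (hr : pInt p r) : pInt p (-r) := by
  rw [pInt_iff hp] at *
  obtain ⟨x, d, hd, rfl⟩ := hr
  exact ⟨-x, d, hd, by push_cast; ring⟩

lemma pInt.sub {p : ℕ} (hp : p.Prime) {r s : ℚ} (hr : pInt p r) (hs : pInt p s) :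
    pInt p (r - s) := by
  rw [sub_eq_add_neg]; exact hr.add hp (hs.neg hp)

lemma pInt.pow {p : ℕ} (hp : p.Prime) {r : ℚ} (hr : pInt p r) (k : ℕ) : pInt p (r ^ k) := by
  induction k with
  | zero => simpa using pInt_one hp
  | succ k ih => rw [pow_succ]; exact ih.mul hp hr

lemma pInt.div_int {p : ℕ} (hp : p.Prime) {r : ℚ} (hr : pInt p r) {m : ℤ}
    (hm : ¬ (p:ℤ) ∣ m) : pInt p (r / m) := by
  rw [pInt_iff hp] at *
  obtain ⟨x, d, hd, rfl⟩ := hr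
  refine ⟨x, d * m, fun h => ?_, by push_cast; rw [div_div]⟩
  rcases (prime_int hp).2.2 _ _ h with h' | h' <;> [exact hd h'; exact hm h']

lemma pInt.sum {p : ℕ} (hp : p.Prime) {ι : Type*} {s : Finset ι} {f : ι → ℚ}
    (h : ∀ i ∈ s, pInt p (f i)) : pInt p (∑ i ∈ s, f i) := by
  classical
  induction s using Finset.induction with
  | empty => simpa using pInt_zero hp
  | insert _ _ hx ih =>
    rw [Finset.sum_insert hx]
    exact (h _ (Finset.mem_insert_self _ _)).add hp
      (ih fun i hi => h i (Finset.mem_insert_of_mem hi))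

lemma pInt.prod {p : ℕ} (hp : p.Prime) {ι : Type*} {s : Finset ι} {f : ι → ℚ}
    (h : ∀ i ∈ s, pInt p (f i)) : pInt p (∏ i ∈ s, f i) := by
  classical
  induction s using Finset.induction with
  | empty => simpa using pInt_one hp
  | insert _ _ hx ih =>
    rw [Finset.prod_insert hx]
    exact (h _ (Finset.mem_insert_self _ _)).mul hp
      (ih fun i hi => h i (Finset.mem_insert_of_mem hi))

lemma pInt_gchoose {p : ℕ} (hp : p.Prime) {r : ℚ} (hr : pInt p r) {k : ℕ} (hk : k < p) :
    pInt p (gchoose r k) := by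
  have h1 : ¬ (p:ℤ) ∣ (k.factorial : ℤ) := by
    rw [Int.natCast_dvd_natCast, hp.dvd_factorial]
    omega
  have h2 : pInt p (∏ i ∈ Finset.range k, (r - i)) :=
    pInt.prod hp fun i _ => hr.sub hp (pInt_natCast hp i)
  simpa [gchoose] using h2.div_int hp h1

lemma pCong.refl {p : ℕ} (hp : p.Prime) (r : ℚ) : pCong p r r :=
  ⟨0, pInt_zero hp, by ring⟩

lemma pCong.symm {p : ℕ} (hp : p.Prime) {r s : ℚ} (h : pCong p r s) : pCong p s r := by
  obtain ⟨c, hc, hc'⟩ := h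
  exact ⟨-c, hc.neg hp, by rw [← neg_sub, hc']; ring⟩

lemma pCong.trans {p : ℕ} (hp : p.Prime) {r s u : ℚ} (h1 : pCong p r s) (h2 : pCong p s u) :
    pCong p r u := by
  obtain ⟨c, hc, hc'⟩ := h1
  obtain ⟨d, hd, hd'⟩ := h2
  exact ⟨c + d, hc.add hp hd, by rw [mul_add, ← hc', ← hd']; ring⟩

lemma pCong.add {p : ℕ} (hp : p.Prime) {r s r' s' : ℚ} (h1 : pCong p r s)
    (h2 : pCong p r' s') : pCong p (r + r') (s + s') := by
  obtain ⟨c, hc, hc'⟩ := h1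
  obtain ⟨d, hd, hd'⟩ := h2
  exact ⟨c + d, hc.add hp hd, by rw [mul_add, ← hc', ← hd']; ring⟩

lemma pCong.neg {p : ℕ} (hp : p.Prime) {r s : ℚ} (h : pCong p r s) : pCong p (-r) (-s) := by
  obtain ⟨c, hc, hc'⟩ := h
  exact ⟨-c, hc.neg hp, by rw [mul_neg, ← hc']; ring⟩

lemma pCong.sub {p : ℕ} (hp : p.Prime) {r s r' s' : ℚ} (h1 : pCong p r s)
    (h2 : pCong p r' s') : pCong p (r - r') (s - s') := by
  rw [sub_eq_add_neg, sub_eq_add_neg]; exact h1.add hp (h2.neg hp)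

lemma pCong.mul {p : ℕ} (hp : p.Prime) {r s r' s' : ℚ} (hr : pInt p r) (hs' : pInt p s')
    (h1 : pCong p r s) (h2 : pCong p r' s') : pCong p (r * r') (s * s') := by
  obtain ⟨c, hc, hc'⟩ := h1
  obtain ⟨d, hd, hd'⟩ := h2
  refine ⟨r * d + c * s', (hr.mul hp hd).add hp (hc.mul hp hs'), ?_⟩
  have : r * r' - s * s' = r * (r' - s') + (r - s) * s' := by ring
  rw [this, hc', hd']; ring

lemma pCong.div_int {p : ℕ} (hp : p.Prime) {r s : ℚ} {m : ℤ} (hm : ¬ (p:ℤ) ∣ m)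
    (h : pCong p r s) : pCong p (r / m) (s / m) := by
  obtain ⟨c, hc, hc'⟩ := h
  refine ⟨c / m, hc.div_int hp hm, ?_⟩
  rw [div_sub_div_same, hc', mul_div_assoc]

lemma pCong.sum {p : ℕ} (hp : p.Prime) {ι : Type*} {s : Finset ι} {f g : ι → ℚ}
    (h : ∀ i ∈ s, pCong p (f i) (g i)) :
    pCong p (∑ i ∈ s, f i) (∑ i ∈ s, g i) := by
  classical
  induction s using Finset.induction with
  | empty => simpa using pCong.refl hp 0
  | insert _ _ hx ih =>
    rw [Finset.sum_insert hx, Finset.sum_insert hx]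
    exact (h _ (Finset.mem_insert_self _ _)).add hp
      (ih fun i hi => h i (Finset.mem_insert_of_mem hi))

lemma pCong.prod {p : ℕ} (hp : p.Prime) {s : Finset ℕ} {f g : ℕ → ℚ}
    (hf : ∀ i ∈ s, pInt p (f i)) (hg : ∀ i ∈ s, pInt p (g i))
    (h : ∀ i ∈ s, pCong p (f i) (g i)) :
    pCong p (∏ i ∈ s, f i) (∏ i ∈ s, g i) := by
  classical
  induction s using Finset.induction with
  | empty => simpa using pCong.refl hp 1
  | insert _ _ hx ih =>
    rw [Finset.prod_insert hx, Finset.prod_insert hx]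
    exact pCong.mul hp (hf _ (Finset.mem_insert_self _ _))
      (pInt.prod hp fun i hi => hg i (Finset.mem_insert_of_mem hi))
      (h _ (Finset.mem_insert_self _ _))
      (ih (fun i hi => hf i (Finset.mem_insert_of_mem hi))
        (fun i hi => hg i (Finset.mem_insert_of_mem hi))
        (fun i hi => h i (Finset.mem_insert_of_mem hi)))

lemma pCong.pow {p : ℕ} (hp : p.Prime) {r s : ℚ} (hr : pInt p r) (hs : pInt p s)
    (h : pCong p r s) (k : ℕ) : pCong p (r ^ k) (s ^ k) := by
  induction k with
  | zero => simpa using pCong.refl hp 1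
  | succ k ih => rw [pow_succ, pow_succ]; exact ih.mul hp (hr.pow hp k) hs h

lemma pCong.gchoose {p : ℕ} (hp : p.Prime) {a b : ℚ} (ha : pInt p a) (hb : pInt p b)
    (h : pCong p a b) {k : ℕ} (hk : k < p) :
    pCong p (gchoose a k) (gchoose b k) := by
  have h1 : ¬ (p:ℤ) ∣ (k.factorial : ℤ) := by
    rw [Int.natCast_dvd_natCast, hp.dvd_factorial]
    omega
  have h2 : pCong p (∏ i ∈ Finset.range k, (a - i)) (∏ i ∈ Finset.range k, (b - i)) :=
    pCong.prod hp (fun i _ => ha.sub hp (pInt_natCast hp i))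
      (fun i _ => hb.sub hp (pInt_natCast hp i))
      (fun i _ => h.sub hp (pCong.refl hp i))
  have := h2.div_int hp h1
  simpa [_root_.gchoose] using this

lemma not_dvd_num {p : ℕ} (hp : p.Prime) {t : ℚ} (ht : pInt p t) (ht0 : ¬ pCong p t 0) :
    ¬ (p:ℤ) ∣ t.num := by
  intro ⟨m, hm⟩
  apply ht0
  refine ⟨(m : ℚ) / (t.den : ℤ), ?_, ?_⟩
  · rw [pInt_iff hp]
    exact ⟨m, t.den, by exact_mod_cast ht, rfl⟩
  · have hden : ((t.den : ℤ) : ℚ) ≠ 0 := by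
      exact_mod_cast t.den_ne_zero
    rw [sub_zero, mul_div_assoc', eq_div_iff hden]
    have hden' : ((t.den : ℕ) : ℚ) ≠ 0 := by exact_mod_cast t.den_ne_zero
    have : t * ((t.den : ℤ) : ℚ) = (t.num : ℚ) := by
      have h := (Rat.num_div_den t).symm
      rw [eq_div_iff hden'] at h
      push_cast
      linarith [h]
    rw [this, hm]
    push_cast
    ring

lemma pInt_inv {p : ℕ} (hp : p.Prime) {t : ℚ} (ht : pInt p t) (ht0 : ¬ pCong p t 0) :
    pInt p t⁻¹ := by
  rw [pInt_iff hp]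
  refine ⟨t.den, t.num, not_dvd_num hp ht ht0, ?_⟩
  conv_lhs => rw [← Rat.num_div_den t]
  rw [inv_div]
  push_cast
  ring

lemma pCong_ne_zero {p : ℕ} (hp : p.Prime) {t : ℚ} (ht0 : ¬ pCong p t 0) : t ≠ 0 := by
  rintro rfl
  exact ht0 (pCong.refl hp 0)

-- basic gchoose facts
lemma gchoose_zero (x : ℚ) : gchoose x 0 = 1 := by simp [gchoose]

lemma gchoose_succ (x : ℚ) (k : ℕ) :
    gchoose x (k + 1) = gchoose x k * (x - k) / (k + 1) := by
  have hk : (k.factorial : ℚ) ≠ 0 := by exact_mod_cast k.factorial_ne_zero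
  have hk1 : ((k : ℚ) + 1) ≠ 0 := by positivity
  rw [gchoose, gchoose, Finset.prod_range_succ, Nat.factorial_succ]
  push_cast
  rw [div_mul_eq_mul_div, div_div, mul_comm ((k:ℚ) + 1) (k.factorial : ℚ)]

lemma gchoose_natCast (n k : ℕ) : gchoose (n : ℚ) k = (n.choose k : ℚ) := by
  induction k with
  | zero => simp [gchoose_zero]
  | succ k ih =>
    rw [gchoose_succ, ih]
    rcases le_or_gt (k + 1) n with h | h
    · have hc : (n.choose (k+1) : ℚ) * (k + 1) = (n.choose k : ℚ) * ((n : ℚ) - k) := by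
        have := Nat.choose_succ_right_eq n k
        have hnk : ((n - k : ℕ) : ℚ) = (n : ℚ) - k := by
          have : k ≤ n := by omega
          push_cast [this]; ring
        calc (n.choose (k+1) : ℚ) * (k + 1) = ((n.choose (k+1) * (k+1) : ℕ) : ℚ) := by push_cast; ring
        _ = ((n.choose k * (n - k) : ℕ) : ℚ) := by rw [this]
        _ = (n.choose k : ℚ) * ((n : ℚ) - k) := by push_cast; rw [hnk]
      have hk1 : ((k : ℚ) + 1) ≠ 0 := by positivity
      field_simp
      linarith [hc]
    · have h1 : n.choose (k+1) = 0 := Nat.choose_eq_zero_of_lt h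
      rcases eq_or_lt_of_le (Nat.lt_succ_iff.mp h) with h2 | h2
      · subst h2
        simp
      · rw [Nat.choose_eq_zero_of_lt h2, h1]
        simp

lemma gchoose_pascal (x : ℚ) (k : ℕ) :
    gchoose (x + 1) (k + 1) = gchoose x (k + 1) + gchoose x k := by
  have hk : (k.factorial : ℚ) ≠ 0 := by exact_mod_cast k.factorial_ne_zero
  have hk1 : ((k : ℚ) + 1) ≠ 0 := by positivity
  have hP : ∏ i ∈ Finset.range (k+1), (x + 1 - i) = (x + 1) * ∏ i ∈ Finset.range k, (x - i) := by
    rw [Finset.prod_range_succ']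
    have : ∀ i ∈ Finset.range k, (x + 1 - ((i:ℕ) + 1 : ℕ)) = x - i := by
      intro i _; push_cast; ring
    rw [Finset.prod_congr rfl this]
    push_cast
    ring
  rw [gchoose, gchoose, gchoose, hP, Finset.prod_range_succ, Nat.factorial_succ]
  push_cast
  field_simp
  ring

lemma gchoose_reflect (x : ℚ) (k : ℕ) :
    gchoose ((k : ℚ) - 1 - x) k = (-1) ^ k * gchoose x k := by
  rw [gchoose, gchoose]
  have h1 : ∏ i ∈ Finset.range k, ((k : ℚ) - 1 - x - i)
      = ∏ j ∈ Finset.range k, ((j : ℚ) - x) := by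
    rw [← Finset.prod_range_reflect (fun j => ((j : ℚ) - x)) k]
    refine Finset.prod_congr rfl fun i hi => ?_
    rw [Finset.mem_range] at hi
    have : ((k - 1 - i : ℕ) : ℚ) = (k : ℚ) - 1 - i := by
      have h2 : 1 + i ≤ k := by omega
      push_cast [Nat.sub_sub, Nat.cast_sub h2]
      ring
    rw [this]
    ring
  have h2 : ∏ j ∈ Finset.range k, ((j : ℚ) - x) = (-1) ^ k * ∏ j ∈ Finset.range k, (x - j) := by
    rw [show ((-1 : ℚ) ^ k) = ∏ _j ∈ Finset.range k, (-1 : ℚ) by simp, ← Finset.prod_mul_distrib]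
    exact Finset.prod_congr rfl fun j _ => by ring
  rw [h1, h2, mul_div_assoc]

lemma gchoose_vandermonde (M : ℕ) : ∀ (N : ℕ) (b : ℚ),
    ∑ j ∈ Finset.range (N + 1), (M.choose j : ℚ) * gchoose b (N - j) = gchoose (b + M) N := by
  induction M with
  | zero =>
    intro N b
    rw [Finset.sum_eq_single 0]
    · simp
    · intro j _ hj
      rw [Nat.choose_eq_zero_of_lt (by omega)]
      simp
    · intro h
      simp at h
  | succ M ih =>
    intro N b
    match N with
    | 0 => simp [gchoose_zero]
    | N' + 1 =>
      rw [Finset.sum_range_succ' (fun j => ((M+1).choose j : ℚ) * gchoose b (N' + 1 - j)) (N' + 1)]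
      have e1 : ∀ i ∈ Finset.range (N' + 1),
          ((M+1).choose (i+1) : ℚ) * gchoose b (N' + 1 - (i+1))
          = (M.choose i : ℚ) * gchoose b (N' - i) + (M.choose (i+1) : ℚ) * gchoose b (N' - i) := by
        intro i _
        have h5 : N' + 1 - (i + 1) = N' - i := by omega
        rw [Nat.choose_succ_succ, h5]
        push_cast [Nat.succ_eq_add_one]
        ring
      rw [Finset.sum_congr rfl e1, Finset.sum_add_distrib]
      have e2 : ∑ i ∈ Finset.range (N' + 1), (M.choose i : ℚ) * gchoose b (N' - i)
          = gchoose (b + M) N' := ih N' b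
      have e3 : (∑ i ∈ Finset.range (N' + 1), (M.choose (i+1) : ℚ) * gchoose b (N' - i))
          + ((M+1).choose 0 : ℚ) * gchoose b (N' + 1 - 0)
          = gchoose (b + M) (N' + 1) := by
        rw [← ih (N' + 1) b,
          Finset.sum_range_succ' (fun j => (M.choose j : ℚ) * gchoose b (N' + 1 - j)) (N' + 1)]
        congr 1
        · refine Finset.sum_congr rfl fun i _ => ?_
          have : N' + 1 - (i + 1) = N' - i := by omega
          rw [this]
        · simp
      rw [add_assoc, e2, e3]
      have : b + (M + 1 : ℕ) = (b + M) + 1 := by push_cast; ring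
      rw [this, gchoose_pascal]
      ring

lemma expand_sum (n : ℕ) (b s : ℚ) :
    ∑ k ∈ Finset.range (n + 1), (n.choose k : ℚ) * gchoose b k * (1 - s) ^ k
      = ∑ m ∈ Finset.range (n + 1), (n.choose m : ℚ) * gchoose (b + n - m) n * (-s) ^ m := by
  have hbin : ∀ k : ℕ, (1 - s) ^ k = ∑ m ∈ Finset.range (k + 1), (k.choose m : ℚ) * (-s) ^ m := by
    intro k
    rw [show (1 - s) = (-s) + 1 by ring, add_pow]
    exact Finset.sum_congr rfl fun m _ => by ring
  calc ∑ k ∈ Finset.range (n + 1), (n.choose k : ℚ) * gchoose b k * (1 - s) ^ k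
      = ∑ k ∈ Finset.range (n + 1), ∑ m ∈ Finset.range (n + 1),
          (n.choose k : ℚ) * gchoose b k * ((k.choose m : ℚ) * (-s) ^ m) := by
        refine Finset.sum_congr rfl fun k hk => ?_
        rw [Finset.mem_range] at hk
        rw [hbin k, Finset.mul_sum]
        refine Finset.sum_subset (fun x hx => ?_) (fun m _ hm => ?_)
        · rw [Finset.mem_range] at hx ⊢; omega
        · rw [Finset.mem_range, not_lt] at hm
          rw [show (k.choose m : ℚ) = 0 from Nat.cast_eq_zero.mpr (Nat.choose_eq_zero_of_lt (show k < m by omega))]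
          ring
    _ = ∑ m ∈ Finset.range (n + 1), ∑ k ∈ Finset.range (n + 1),
          (n.choose k : ℚ) * gchoose b k * ((k.choose m : ℚ) * (-s) ^ m) := Finset.sum_comm
    _ = ∑ m ∈ Finset.range (n + 1), (n.choose m : ℚ) * gchoose (b + n - m) n * (-s) ^ m := by
        refine Finset.sum_congr rfl fun m hm => ?_
        rw [Finset.mem_range, Nat.lt_succ_iff] at hm
        have hcount : n + 1 - m = n - m + 1 := by omega
        have A : ∑ k ∈ Finset.range (n + 1),
            (n.choose k : ℚ) * gchoose b k * ((k.choose m : ℚ) * (-s) ^ m)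
            = ∑ k ∈ Finset.Ico m (n + 1),
            (n.choose k : ℚ) * gchoose b k * ((k.choose m : ℚ) * (-s) ^ m) := by
          rw [Finset.range_eq_Ico,
            ← Finset.sum_Ico_consecutive _ (Nat.zero_le m) (show m ≤ n + 1 by omega)]
          have hz : ∑ k ∈ Finset.Ico 0 m,
              (n.choose k : ℚ) * gchoose b k * ((k.choose m : ℚ) * (-s) ^ m) = 0 := by
            refine Finset.sum_eq_zero fun k hk => ?_
            rw [Finset.mem_Ico] at hk
            rw [show (k.choose m : ℚ) = 0 from Nat.cast_eq_zero.mpr (Nat.choose_eq_zero_of_lt (show k < m by omega))]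
            ring
          rw [hz, zero_add]
        have B : ∑ k ∈ Finset.Ico m (n + 1),
            (n.choose k : ℚ) * gchoose b k * ((k.choose m : ℚ) * (-s) ^ m)
            = ∑ j ∈ Finset.range (n - m + 1),
            (n.choose (m + j) : ℚ) * gchoose b (m + j) * (((m + j).choose m : ℚ) * (-s) ^ m) := by
          rw [Finset.sum_Ico_eq_sum_range, hcount]
        rw [A, B]
        have C : ∀ j ∈ Finset.range (n - m + 1),
            (n.choose (m + j) : ℚ) * gchoose b (m + j) * (((m + j).choose m : ℚ) * (-s) ^ m)
            = ((n.choose m : ℚ) * (-s) ^ m) * (((n - m).choose j : ℚ) * gchoose b (m + j)) := by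
          intro j hj
          rw [Finset.mem_range] at hj
          have htri : (n.choose (m + j)) * ((m + j).choose m)
              = (n.choose m) * ((n - m).choose j) := by
            have h6 := Nat.choose_mul (n := n) (show m ≤ m + j by omega)
            have h7 : m + j - m = j := by omega
            rw [h7] at h6
            exact h6
          have htri' : (n.choose (m + j) : ℚ) * ((m + j).choose m : ℚ)
              = (n.choose m : ℚ) * ((n - m).choose j : ℚ) := by exact_mod_cast htri
          calc (n.choose (m + j) : ℚ) * gchoose b (m + j) * (((m + j).choose m : ℚ) * (-s) ^ m)
              = (n.choose (m + j) : ℚ) * ((m + j).choose m : ℚ) * gchoose b (m + j) * (-s) ^ m := by ring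
            _ = (n.choose m : ℚ) * ((n - m).choose j : ℚ) * gchoose b (m + j) * (-s) ^ m := by rw [htri']
            _ = ((n.choose m : ℚ) * (-s) ^ m) * (((n - m).choose j : ℚ) * gchoose b (m + j)) := by ring
        rw [Finset.sum_congr rfl C, ← Finset.mul_sum]
        have step2 : ∑ j ∈ Finset.range (n - m + 1), ((n - m).choose j : ℚ) * gchoose b (m + j)
            = ∑ j ∈ Finset.range (n - m + 1), ((n - m).choose j : ℚ) * gchoose b (n - j) := by
          rw [← Finset.sum_range_reflect (fun j => ((n - m).choose j : ℚ) * gchoose b (m + j)) (n - m + 1)]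
          refine Finset.sum_congr rfl fun j hj => ?_
          rw [Finset.mem_range] at hj
          have h8 : n - m + 1 - 1 - j = n - m - j := by omega
          have h9 : m + (n - m - j) = n - j := by omega
          have h10 : (n - m).choose (n - m - j) = (n - m).choose j :=
            Nat.choose_symm (show j ≤ n - m by omega)
          rw [h8, h9, h10]
        have step3 : ∑ j ∈ Finset.range (n - m + 1), ((n - m).choose j : ℚ) * gchoose b (n - j)
            = gchoose (b + (n - m : ℕ)) n := by
          rw [← gchoose_vandermonde (n - m) n b]
          refine Finset.sum_subset (fun x hx => ?_) (fun j _ hj => ?_)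
          · rw [Finset.mem_range] at hx ⊢
            have := Nat.sub_le n m
            omega
          · rw [Finset.mem_range, not_lt] at hj
            rw [show ((n - m).choose j : ℚ) = 0 from Nat.cast_eq_zero.mpr (Nat.choose_eq_zero_of_lt (show n - m < j by omega))]
            ring
        have hcast : ((n - m : ℕ) : ℚ) = (n : ℚ) - m := by push_cast [Nat.cast_sub hm]; ring
        rw [step2, step3, hcast, add_sub_assoc]
        ring

lemma pfaff (n : ℕ) (b t : ℚ) (ht : t ≠ 0) :
    ∑ k ∈ Finset.range (n + 1), (n.choose k : ℚ) * gchoose b k * (1 - t) ^ k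
      = t ^ n * ∑ k ∈ Finset.range (n + 1),
          (n.choose k : ℚ) * gchoose (-1 - b) k * (1 - 1/t) ^ k := by
  rw [expand_sum n b t, expand_sum n (-1 - b) (1/t), Finset.mul_sum,
    ← Finset.sum_range_reflect
      (fun m => t ^ n * ((n.choose m : ℚ) * gchoose (-1 - b + n - m) n * (-(1/t)) ^ m)) (n + 1)]
  refine Finset.sum_congr rfl fun m hm => ?_
  rw [Finset.mem_range, Nat.lt_succ_iff] at hm
  have h1 : n + 1 - 1 - m = n - m := by omega
  have h2 : n.choose (n - m) = n.choose m := Nat.choose_symm hm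
  have hc : ((n - m : ℕ) : ℚ) = (n : ℚ) - m := by push_cast [Nat.cast_sub hm]; ring
  rw [h1, h2, hc]
  have e2 : (-1 - b + (n : ℚ) - ((n : ℚ) - (m : ℚ))) = (n : ℚ) - 1 - (b + (n : ℚ) - (m : ℚ)) := by
    ring
  rw [e2, gchoose_reflect]
  have ht' : t ^ (n - m) ≠ 0 := pow_ne_zero _ ht
  have hpow : (-1 : ℚ) ^ n * (-1 : ℚ) ^ (n - m) = (-1) ^ m := by
    rw [← pow_add, show n + (n - m) = m + 2 * (n - m) by omega, pow_add, pow_mul]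
    norm_num
  have htn : t ^ n = t ^ m * t ^ (n - m) := by rw [← pow_add]; congr 1; omega
  have hone : t ^ (n - m) * (1/t) ^ (n - m) = 1 := by
    rw [← mul_pow, mul_one_div_cancel ht, one_pow]
  have key : (-t) ^ m = t ^ n * ((-1 : ℚ) ^ n * (-(1/t)) ^ (n - m)) := by
    calc (-t) ^ m = (-1 : ℚ) ^ m * t ^ m * 1 := by rw [neg_pow]; ring
      _ = ((-1 : ℚ) ^ n * (-1 : ℚ) ^ (n - m)) * t ^ m * (t ^ (n - m) * (1/t) ^ (n - m)) := by
          rw [hpow, hone]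
      _ = (t ^ m * t ^ (n - m)) * ((-1 : ℚ) ^ n * ((-1 : ℚ) ^ (n - m) * (1/t) ^ (n - m))) := by
          ring
      _ = t ^ n * ((-1 : ℚ) ^ n * (-(1/t)) ^ (n - m)) := by
          rw [← htn, ← neg_pow]
  rw [key]
  ring


theorem sum_gchoose_congr (p : ℕ) (hp : p.Prime) (hodd : Odd p)
    (a t : ℚ) (ha : pInt p a) (ht : pInt p t) (ht0 : ¬ pCong p t 0)
    (n : ℕ) (hn : n < p) (han : pCong p a n) :
    pCong p
      (∑ k ∈ Finset.range p, gchoose a k * gchoose (-1/2 - a) k * (1 - t) ^ k)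
      (t ^ n *
        ∑ k ∈ Finset.range p, gchoose a k * gchoose (a - 1/2) k * (1 - 1/t) ^ k) := by
  have htne : t ≠ 0 := pCong_ne_zero hp ht0
  have hp2 : ¬ (p : ℤ) ∣ 2 := by
    intro h
    have h2 : p ∣ 2 := by exact_mod_cast h
    have := (Nat.prime_dvd_prime_iff_eq hp Nat.prime_two).mp h2
    rw [this, Nat.odd_iff] at hodd
    omega
  have hhalf : pInt p (1/2 : ℚ) := by
    rw [pInt_iff hp]
    exact ⟨1, 2, hp2, by norm_num⟩
  have hIn : pInt p (n : ℚ) := pInt_natCast hp n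
  have hIb : pInt p (-1/2 - a) := by
    rw [show (-1/2 - a : ℚ) = -(1/2 + a) by ring]
    exact (hhalf.add hp ha).neg hp
  have hIb' : pInt p (-1/2 - (n : ℚ)) := by
    rw [show (-1/2 - (n : ℚ)) = -(1/2 + (n : ℚ)) by ring]
    exact (hhalf.add hp hIn).neg hp
  have hIc : pInt p (a - 1/2) := ha.sub hp hhalf
  have hIc' : pInt p ((n : ℚ) - 1/2) := hIn.sub hp hhalf
  have hI1t : pInt p (1 - t) := (pInt_one hp).sub hp ht
  have hIinv : pInt p (1 - 1/t) := by
    rw [one_div]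
    exact (pInt_one hp).sub hp (pInt_inv hp ht ht0)
  have hCb : pCong p (-1/2 - a) (-1/2 - (n : ℚ)) :=
    (pCong.refl hp (-1/2)).sub hp han
  have hCc : pCong p (a - 1/2) ((n : ℚ) - 1/2) :=
    han.sub hp (pCong.refl hp (1/2))
  -- step 1 : replace a by n in the left sum
  have step1 : pCong p
      (∑ k ∈ Finset.range p, gchoose a k * gchoose (-1/2 - a) k * (1 - t) ^ k)
      (∑ k ∈ Finset.range p, gchoose (n : ℚ) k * gchoose (-1/2 - (n : ℚ)) k * (1 - t) ^ k) := by
    refine pCong.sum hp fun k hk => ?_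
    rw [Finset.mem_range] at hk
    exact pCong.mul hp
      ((pInt_gchoose hp ha hk).mul hp (pInt_gchoose hp hIb hk))
      (hI1t.pow hp k)
      (pCong.mul hp (pInt_gchoose hp ha hk) (pInt_gchoose hp hIb' hk)
        (pCong.gchoose hp ha hIn han hk)
        (pCong.gchoose hp hIb hIb' hCb hk))
      (pCong.refl hp _)
  -- step 2 : truncate, apply Pfaff, untruncate
  have trunc1 : ∑ k ∈ Finset.range p, gchoose (n : ℚ) k * gchoose (-1/2 - (n : ℚ)) k * (1 - t) ^ k
      = ∑ k ∈ Finset.range (n + 1), (n.choose k : ℚ) * gchoose (-1/2 - (n : ℚ)) k * (1 - t) ^ k := by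
    rw [← Finset.sum_subset (show Finset.range (n+1) ⊆ Finset.range p from fun x hx => by
        rw [Finset.mem_range] at hx ⊢; omega) (fun k _ hk => by
        rw [Finset.mem_range, not_lt] at hk
        rw [gchoose_natCast, Nat.choose_eq_zero_of_lt (show n < k by omega)]
        simp)]
    exact Finset.sum_congr rfl fun k _ => by rw [gchoose_natCast]
  have trunc2 : ∑ k ∈ Finset.range p, gchoose (n : ℚ) k * gchoose ((n : ℚ) - 1/2) k * (1 - 1/t) ^ k
      = ∑ k ∈ Finset.range (n + 1), (n.choose k : ℚ) * gchoose ((n : ℚ) - 1/2) k * (1 - 1/t) ^ k := by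
    rw [← Finset.sum_subset (show Finset.range (n+1) ⊆ Finset.range p from fun x hx => by
        rw [Finset.mem_range] at hx ⊢; omega) (fun k _ hk => by
        rw [Finset.mem_range, not_lt] at hk
        rw [gchoose_natCast, Nat.choose_eq_zero_of_lt (show n < k by omega)]
        simp)]
    exact Finset.sum_congr rfl fun k _ => by rw [gchoose_natCast]
  have hpf := pfaff n (-1/2 - (n : ℚ)) t htne
  rw [show (-1 - (-1/2 - (n : ℚ))) = ((n : ℚ) - 1/2) by ring] at hpf
  have step2 : ∑ k ∈ Finset.range p, gchoose (n : ℚ) k * gchoose (-1/2 - (n : ℚ)) k * (1 - t) ^ k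
      = t ^ n * ∑ k ∈ Finset.range p,
          gchoose (n : ℚ) k * gchoose ((n : ℚ) - 1/2) k * (1 - 1/t) ^ k := by
    rw [trunc1, trunc2, hpf]
  -- step 3 : replace n by a on the right
  have step3 : pCong p
      (t ^ n * ∑ k ∈ Finset.range p,
        gchoose (n : ℚ) k * gchoose ((n : ℚ) - 1/2) k * (1 - 1/t) ^ k)
      (t ^ n * ∑ k ∈ Finset.range p,
        gchoose a k * gchoose (a - 1/2) k * (1 - 1/t) ^ k) := by
    refine pCong.mul hp (ht.pow hp n)
      (pInt.sum hp fun k hk => ?_) (pCong.refl hp _) (pCong.sum hp fun k hk => ?_)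
    · rw [Finset.mem_range] at hk
      exact ((pInt_gchoose hp ha hk).mul hp (pInt_gchoose hp hIc hk)).mul hp (hIinv.pow hp k)
    · rw [Finset.mem_range] at hk
      exact pCong.mul hp
        ((pInt_gchoose hp hIn hk).mul hp (pInt_gchoose hp hIc' hk))
        (hIinv.pow hp k)
        (pCong.mul hp (pInt_gchoose hp hIn hk) (pInt_gchoose hp hIc hk)
          (pCong.gchoose hp hIn ha (han.symm hp) hk)
          (pCong.gchoose hp hIc' hIc (hCc.symm hp) hk))
        (pCong.refl hp _)
  exact (step1.trans hp (step2 ▸ pCong.refl hp _)).trans hp step3
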